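/- Let ω > 0, let ε be a real number with ε > −1/2, let n be a natural number, set g = ε(ε−1), and define for u > 0 the generalized Laguerre function L_n^{(ε−1/2)}(u) = (1/n!)·u^{−(ε−1/2)}·e^u·(d/du)^n [u^{ε−1/2+n}·e^{−u}]. Then the wave function Ψ_n(x) = x^ε·exp(−ωx²/2)·L_n^{(ε−1/2)}(ωx²) satisfies the Calogero eigenvalue equation −(1/2)·Ψ_n''(x) + [ω²x²/2 + g/(2x²)]·Ψ_n(x) = E_n·Ψ_n(x) for all x > 0, with discrete energy E_n = (2n + ε + 1/2)·ω. -/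

import Mathlib

open Finset



/-- The generalized Laguerre function of degree `n` and (real) index `a`, given by the
Rodrigues formula `L_n^a(u) = (1/n!)·u^{−a}·e^u·(d/du)^n [u^{a+n}·e^{−u}]`. -/
noncomputable def laguerreFn (n : ℕ) (a : ℝ) (u : ℝ) : ℝ :=
  (1 / (Nat.factorial n : ℝ)) * u ^ (-a) * Real.exp u *
    iteratedDeriv n (fun v : ℝ => v ^ (a + (n : ℝ)) * Real.exp (-v)) u


noncomputable def rodSum (n : ℕ) (b : ℝ) (u : ℝ) : ℝ :=
  ∑ k ∈ Finset.range (n+1),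
    (n.choose k : ℝ) * (∏ j ∈ Finset.range k, (b - j)) * ((-1:ℝ)^n * (-1:ℝ)^k)
      * u ^ (b - k)

lemma rodrigues (b : ℝ) (n : ℕ) : ∀ u : ℝ, 0 < u →
    iteratedDeriv n (fun v : ℝ => v ^ b * Real.exp (-v)) u = rodSum n b u * Real.exp (-u) := by
  induction n with
  | zero =>
      intro u hu
      simp [rodSum, iteratedDeriv_zero]
  | succ n IH =>
      intro u hu
      rw [iteratedDeriv_succ]
      have hev : iteratedDeriv n (fun v : ℝ => v ^ b * Real.exp (-v))
          =ᶠ[nhds u] fun w => rodSum n b w * Real.exp (-w) := by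
        filter_upwards [Ioi_mem_nhds hu] with w hw
        exact IH w hw
      rw [hev.deriv_eq]
      -- derivative of the explicit sum
      have hsum : HasDerivAt (fun w : ℝ => rodSum n b w)
          (∑ k ∈ Finset.range (n+1),
            (n.choose k : ℝ) * (∏ j ∈ Finset.range k, (b - j)) * ((-1:ℝ)^n * (-1:ℝ)^k)
              * ((b - k) * u ^ (b - k - 1))) u := by
        apply HasDerivAt.fun_sum
        intro k _
        exact (Real.hasDerivAt_rpow_const (Or.inl hu.ne')).const_mul _
      have hexp : HasDerivAt (fun w : ℝ => Real.exp (-w)) (Real.exp (-u) * (-1)) u :=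
        (hasDerivAt_neg u).exp
      have hD := (hsum.fun_mul hexp).deriv
      rw [hD]
      -- now the algebraic identity
      have key : (∑ k ∈ Finset.range (n+1),
            (n.choose k : ℝ) * (∏ j ∈ Finset.range k, (b - j)) * ((-1:ℝ)^n * (-1:ℝ)^k)
              * ((b - k) * u ^ (b - k - 1)))
          + rodSum n b u * (-1)
          = rodSum (n+1) b u := by
        set T : ℕ → ℝ := fun k =>
          (∏ j ∈ Finset.range k, (b - j)) * ((-1:ℝ)^(n+1) * (-1:ℝ)^k) * u ^ (b - k) with hT
        have h1 : ∀ k, (n.choose k : ℝ) * (∏ j ∈ Finset.range k, (b - j))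
            * ((-1:ℝ)^n * (-1:ℝ)^k) * ((b - k) * u ^ (b - k - 1))
            = (n.choose k : ℝ) * T (k+1) := by
          intro k
          have hprod : (∏ j ∈ Finset.range (k+1), (b - j))
              = (∏ j ∈ Finset.range k, (b - j)) * (b - k) := Finset.prod_range_succ _ _
          have hexp2 : b - (k+1 : ℕ) = b - k - 1 := by push_cast; ring
          simp only [hT, hprod, hexp2]
          ring
        have h2 : rodSum n b u * (-1)
            = ∑ k ∈ Finset.range (n+1), (n.choose k : ℝ) * T k := by
          rw [rodSum, Finset.sum_mul]
          apply Finset.sum_congr rfl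
          intro k _
          simp only [hT]
          ring
        have h3 : rodSum (n+1) b u = ∑ k ∈ Finset.range (n+2), ((n+1).choose k : ℝ) * T k := by
          rw [rodSum]
          apply Finset.sum_congr rfl
          intro k _
          simp only [hT]; ring
        rw [h2, h3]
        rw [Finset.sum_congr rfl (fun k _ => h1 k)]
        -- RHS: split with sum_range_succ'
        rw [Finset.sum_range_succ' (fun k => ((n+1).choose k : ℝ) * T k) (n+1)]
        have h4 : ∀ i, (((n+1).choose (i+1) : ℕ) : ℝ) = (n.choose i : ℝ) + (n.choose (i+1) : ℝ) := by
          intro i; rw [Nat.choose_succ_succ]; push_cast; ring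
        have h5 : ∑ i ∈ Finset.range (n+1), (((n+1).choose (i+1) : ℕ) : ℝ) * T (i+1)
            = ∑ i ∈ Finset.range (n+1), ((n.choose i : ℝ) * T (i+1) + (n.choose (i+1) : ℝ) * T (i+1)) := by
          apply Finset.sum_congr rfl
          intro i _; rw [h4]; ring
        have h8 : ∑ i ∈ Finset.range (n+1),
              ((n.choose i : ℝ) * T (i+1) + (n.choose (i+1) : ℝ) * T (i+1))
            = ∑ i ∈ Finset.range (n+1), (n.choose i : ℝ) * T (i+1)
              + ∑ i ∈ Finset.range (n+1), (n.choose (i+1) : ℝ) * T (i+1) :=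
          Finset.sum_add_distrib
        have h6 : ∑ i ∈ Finset.range (n+1), (n.choose (i+1) : ℝ) * T (i+1)
            = ∑ k ∈ Finset.range (n+2), (n.choose k : ℝ) * T k - (n.choose 0 : ℝ) * T 0 := by
          rw [Finset.sum_range_succ' (fun k => (n.choose k : ℝ) * T k) (n+1)]
          ring
        have h7 : ∑ k ∈ Finset.range (n+2), (n.choose k : ℝ) * T k
            = ∑ k ∈ Finset.range (n+1), (n.choose k : ℝ) * T k := by
          rw [Finset.sum_range_succ]
          simp [Nat.choose_succ_self]
        have h9 : ((n.choose 0 : ℕ) : ℝ) = 1 := by simp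
        have h10 : (((n+1).choose 0 : ℕ) : ℝ) = 1 := by simp
        rw [h5, h8, h6, h7, h9, h10]
        ring
      rw [← key]
      ring


noncomputable def lagC (n : ℕ) (a : ℝ) (m : ℕ) : ℝ :=
  (n.choose m : ℝ) / (n.factorial : ℝ) * (∏ j ∈ Finset.range (n - m), (a + n - j)) * (-1:ℝ)^m

noncomputable def lagPoly (n : ℕ) (a : ℝ) (u : ℝ) : ℝ :=
  ∑ m ∈ Finset.range (n+1), lagC n a m * u ^ m

noncomputable def lagPoly₁ (n : ℕ) (a : ℝ) (u : ℝ) : ℝ :=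
  ∑ m ∈ Finset.range (n+1), (lagC n a m * m) * u ^ (m-1)

noncomputable def lagPoly₂ (n : ℕ) (a : ℝ) (u : ℝ) : ℝ :=
  ∑ m ∈ Finset.range (n+1), (lagC n a m * m * ((m-1 : ℕ) : ℝ)) * u ^ (m-1-1)

lemma lagPoly_hasDeriv (n : ℕ) (a : ℝ) (u : ℝ) :
    HasDerivAt (lagPoly n a) (lagPoly₁ n a u) u := by
  have h : HasDerivAt (lagPoly n a)
      (∑ m ∈ Finset.range (n+1), lagC n a m * ((m : ℝ) * u ^ (m-1))) u := by
    apply HasDerivAt.fun_sum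
    intro m _
    exact (hasDerivAt_pow m u).const_mul _
  convert h using 1
  rw [lagPoly₁]
  apply Finset.sum_congr rfl
  intro m _; ring

lemma lagPoly₁_hasDeriv (n : ℕ) (a : ℝ) (u : ℝ) :
    HasDerivAt (lagPoly₁ n a) (lagPoly₂ n a u) u := by
  have h : HasDerivAt (lagPoly₁ n a)
      (∑ m ∈ Finset.range (n+1), (lagC n a m * m) * (((m-1 : ℕ) : ℝ) * u ^ (m-1-1))) u := by
    apply HasDerivAt.fun_sum
    intro m _
    exact (hasDerivAt_pow (m-1) u).const_mul _
  convert h using 1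
  rw [lagPoly₂]
  apply Finset.sum_congr rfl
  intro m _; ring

lemma lagC_rec (n : ℕ) (a : ℝ) (m : ℕ) (hm : m < n) :
    lagC n a (m+1) * (((m:ℝ)+1) * ((m:ℝ)+1+a)) + lagC n a m * ((n:ℝ) - m) = 0 := by
  have hnat := Nat.choose_succ_right_eq n m
  have hcast : (n.choose (m+1) : ℝ) * ((m:ℝ)+1) = (n.choose m : ℝ) * ((n:ℝ) - m) := by
    have h := congrArg (Nat.cast : ℕ → ℝ) hnat
    push_cast [Nat.cast_sub hm.le] at h
    linarith
  have hsub : n - m = (n - (m+1)) + 1 := by omega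
  have hfac : ((n - (m+1) : ℕ) : ℝ) = (n:ℝ) - (m:ℝ) - 1 := by
    rw [Nat.cast_sub (by omega)]; push_cast; ring
  rw [lagC, lagC, hsub, Finset.prod_range_succ, hfac]
  have hx : a + (n:ℝ) - ((n:ℝ) - (m:ℝ) - 1) = a + m + 1 := by ring
  rw [hx, pow_succ]
  linear_combination (-((-1:ℝ)^m * (∏ j ∈ Finset.range (n - (m+1)), (a + (n:ℝ) - j)) * (a + m + 1) / (n.factorial : ℝ))) * hcast

lemma lagPoly_ode (n : ℕ) (a : ℝ) (u : ℝ) :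
    u * lagPoly₂ n a u + (a + 1 - u) * lagPoly₁ n a u + n * lagPoly n a u = 0 := by
  have key : ∀ m : ℕ,
      u * ((lagC n a m * m * ((m-1 : ℕ) : ℝ)) * u ^ (m-1-1))
        + (a + 1 - u) * ((lagC n a m * m) * u ^ (m-1))
        + (n:ℝ) * (lagC n a m * u ^ m)
      = (lagC n a m * ((m:ℝ) * ((m:ℝ) + a))) * u ^ (m-1)
        + (lagC n a m * ((n:ℝ) - m)) * u ^ m := by
    intro m
    match m with
    | 0 => simp; ring
    | 1 => push_cast; simp [pow_succ]; ring
    | (m+2) =>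
        rw [show (m+2) - 1 - 1 = m from by omega, show (m+2) - 1 = m + 1 from by omega]
        push_cast
        ring
  rw [lagPoly, lagPoly₁, lagPoly₂, Finset.mul_sum, Finset.mul_sum, Finset.mul_sum]
  rw [← Finset.sum_add_distrib, ← Finset.sum_add_distrib]
  rw [Finset.sum_congr rfl (fun m _ => key m)]
  rw [Finset.sum_add_distrib]
  -- first sum: shift index; G 0 = 0
  rw [Finset.sum_range_succ' (fun m => (lagC n a m * ((m:ℝ) * ((m:ℝ) + a))) * u ^ (m-1)) n]
  -- second sum: last term is 0
  rw [Finset.sum_range_succ (fun m => (lagC n a m * ((n:ℝ) - m)) * u ^ m) n]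
  simp only [Nat.cast_zero, zero_mul, mul_zero, sub_self, add_zero, zero_add]
  rw [← Finset.sum_add_distrib]
  apply Finset.sum_eq_zero
  intro m hm
  have hmn : m < n := Finset.mem_range.mp hm
  have h1 : (m + 1 - 1 : ℕ) = m := by omega
  rw [h1]
  have := lagC_rec n a m hmn
  have hc : ((m+1 : ℕ) : ℝ) = (m:ℝ) + 1 := by push_cast; ring
  rw [hc]
  linear_combination (u ^ m) * this

lemma laguerre_eq_poly (n : ℕ) (a : ℝ) (u : ℝ) (hu : 0 < u) :
    laguerreFn n a u = lagPoly n a u := by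
  rw [laguerreFn, rodrigues (a + (n:ℝ)) n u hu, lagPoly]
  rw [← Finset.sum_range_reflect (fun m => lagC n a m * u ^ m) (n+1)]
  rw [rodSum, Finset.sum_mul, Finset.mul_sum]
  apply Finset.sum_congr rfl
  intro k hk'
  have hk : k ≤ n := Nat.lt_succ_iff.mp (Finset.mem_range.mp hk')
  simp only [Nat.add_sub_cancel]
  rw [lagC, Nat.sub_sub_self hk, Nat.choose_symm hk]
  have hkk : ((-1:ℝ))^k * (-1)^k = 1 := by
    rw [← pow_add, ← two_mul, pow_mul]; norm_num
  have h1 : ((-1:ℝ))^(n-k) = (-1)^n * (-1)^k := by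
    calc ((-1:ℝ))^(n-k) = (-1)^(n-k) * ((-1)^k * (-1)^k) := by rw [hkk]; ring
      _ = ((-1)^(n-k) * (-1)^k) * (-1)^k := by ring
      _ = (-1)^n * (-1)^k := by rw [← pow_add, Nat.sub_add_cancel hk]
  rw [h1]
  rw [← Real.rpow_natCast u (n-k), Nat.cast_sub hk]
  have hsplit : u ^ ((n:ℝ) - k) = u ^ (-a) * u ^ (a + (n:ℝ) - k) := by
    rw [← Real.rpow_add hu]; ring_nf
  rw [hsplit]
  have hexp : Real.exp u * Real.exp (-u) = 1 := by rw [← Real.exp_add]; simp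
  linear_combination ((1 / (n.factorial : ℝ)) * (n.choose k : ℝ)
    * (∏ j ∈ Finset.range k, (a + (n:ℝ) - j)) * ((-1:ℝ)^n * (-1:ℝ)^k)
    * (u ^ (-a) * u ^ (a + (n:ℝ) - (k:ℝ)))) * hexp

/-- The wave functions `Ψ_n(x) = x^ε·exp(−ωx²/2)·L_n^{(ε−1/2)}(ωx²)` solve the Calogero
eigenvalue equation with `g = ε(ε−1)` and discrete energies `E_n = (2n+ε+1/2)·ω`. -/
theorem calogero_spectrum
    (ω ε : ℝ) (hω : 0 < ω) (hε : ε > -(1/2)) (n : ℕ) :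
    ∀ x ∈ Set.Ioi (0 : ℝ),
      -(1/2) * deriv (deriv (fun y : ℝ =>
            y ^ ε * Real.exp (-ω * y ^ 2 / 2) * laguerreFn n (ε - 1/2) (ω * y ^ 2))) x
        + (ω ^ 2 * x ^ 2 / 2 + (ε * (ε - 1)) / (2 * x ^ 2))
          * (x ^ ε * Real.exp (-ω * x ^ 2 / 2) * laguerreFn n (ε - 1/2) (ω * x ^ 2))
        = ((2 * (n : ℝ) + ε + 1/2) * ω)
          * (x ^ ε * Real.exp (-ω * x ^ 2 / 2) * laguerreFn n (ε - 1/2) (ω * x ^ 2)) := by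
  intro x hx
  have hx0 : (0 : ℝ) < x := hx
  set a : ℝ := ε - 1/2 with ha
  -- derivative helper facts
  have hq : ∀ y : ℝ, HasDerivAt (fun t : ℝ => ω * t ^ 2) (2 * ω * y) y := by
    intro y
    have h := (hasDerivAt_pow 2 y).const_mul ω
    exact h.congr_deriv (by simp only [Nat.cast_ofNat, show (2:ℕ)-1 = 1 from rfl, pow_one]; ring)
  have hE : ∀ y : ℝ, HasDerivAt (fun t : ℝ => Real.exp (-ω * t ^ 2 / 2))
      (Real.exp (-ω * y ^ 2 / 2) * (-(ω * y))) y := by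
    intro y
    have hinner : HasDerivAt (fun t : ℝ => -ω * t ^ 2 / 2) (-(ω * y)) y := by
      have hfun : (fun t : ℝ => -ω * t ^ 2 / 2) = fun t : ℝ => (-(1:ℝ)/2) * (ω * t ^ 2) := by
        funext t; ring
      rw [hfun]
      have h := (hq y).const_mul (-(1:ℝ)/2)
      exact h.congr_deriv (by ring)
    exact hinner.exp
  have hLc : ∀ y : ℝ, HasDerivAt (fun t : ℝ => lagPoly n a (ω * t ^ 2))
      (lagPoly₁ n a (ω * y ^ 2) * (2 * ω * y)) y :=
    fun y => by have h := (lagPoly_hasDeriv n a (ω * y ^ 2)).comp y (hq y); exact h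
  have hL1c : ∀ y : ℝ, HasDerivAt (fun t : ℝ => lagPoly₁ n a (ω * t ^ 2))
      (lagPoly₂ n a (ω * y ^ 2) * (2 * ω * y)) y :=
    fun y => by have h := (lagPoly₁_hasDeriv n a (ω * y ^ 2)).comp y (hq y); exact h
  have hyE : ∀ y : ℝ, 0 < y → HasDerivAt (fun t : ℝ => t ^ ε) (ε * y ^ (ε - 1)) y :=
    fun y hy => Real.hasDerivAt_rpow_const (Or.inl hy.ne')
  -- first derivative of the polynomial wave function
  set G1 : ℝ → ℝ := fun y =>
      ε * y ^ (ε - 1) * Real.exp (-ω * y ^ 2 / 2) * lagPoly n a (ω * y ^ 2)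
      + y ^ ε * (Real.exp (-ω * y ^ 2 / 2) * (-(ω * y))) * lagPoly n a (ω * y ^ 2)
      + y ^ ε * Real.exp (-ω * y ^ 2 / 2) * (lagPoly₁ n a (ω * y ^ 2) * (2 * ω * y))
    with hG1def
  have hG1 : ∀ y : ℝ, 0 < y →
      HasDerivAt (fun t : ℝ => t ^ ε * Real.exp (-ω * t ^ 2 / 2) * lagPoly n a (ω * t ^ 2))
        (G1 y) y := by
    intro y hy
    have h := ((hyE y hy).mul (hE y)).mul (hLc y)
    exact h.congr_deriv (by simp only [hG1def, Pi.mul_apply]; ring)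
  -- rewrite the second derivative through eventual equalities
  have hFG : (fun y : ℝ => y ^ ε * Real.exp (-ω * y ^ 2 / 2) * laguerreFn n (ε - 1/2) (ω * y ^ 2))
      =ᶠ[nhds x] (fun y : ℝ => y ^ ε * Real.exp (-ω * y ^ 2 / 2) * lagPoly n a (ω * y ^ 2)) := by
    filter_upwards [Ioi_mem_nhds hx0] with y hy
    have hy' : (0:ℝ) < y := hy
    rw [laguerre_eq_poly n (ε - 1/2) _ (by positivity), ha]
  have hdG : deriv (fun t : ℝ => t ^ ε * Real.exp (-ω * t ^ 2 / 2) * lagPoly n a (ω * t ^ 2))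
      =ᶠ[nhds x] G1 := by
    filter_upwards [Ioi_mem_nhds hx0] with y hy
    exact (hG1 y hy).deriv
  have hdd : deriv (deriv (fun y : ℝ =>
        y ^ ε * Real.exp (-ω * y ^ 2 / 2) * laguerreFn n (ε - 1/2) (ω * y ^ 2))) x
      = deriv G1 x := by
    rw [(hFG.deriv).deriv_eq, hdG.deriv_eq]
  -- second derivative: differentiate G1
  have hyE1 : HasDerivAt (fun t : ℝ => t ^ (ε - 1)) ((ε - 1) * x ^ (ε - 1 - 1)) x :=
    Real.hasDerivAt_rpow_const (Or.inl hx0.ne')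
  have hneg : HasDerivAt (fun t : ℝ => -(ω * t)) (-ω) x := by
    have h := ((hasDerivAt_id x).const_mul ω).neg
    exact h.congr_deriv (by ring)
  have h2ω : HasDerivAt (fun t : ℝ => 2 * ω * t) (2 * ω) x := by
    have h := (hasDerivAt_id x).const_mul (2 * ω)
    simpa using h
  have hT1 := ((hyE1.const_mul ε).mul (hE x)).mul (hLc x)
  have hT2 := ((hyE x hx0).mul ((hE x).mul hneg)).mul (hLc x)
  have hT3 := ((hyE x hx0).mul (hE x)).mul ((hL1c x).mul h2ω)
  have hG2 := (hT1.add hT2).add hT3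
  have hG2' : HasDerivAt G1
      ((ε * ((ε - 1) * x ^ (ε - 1 - 1)) * Real.exp (-ω * x ^ 2 / 2)
          + ε * x ^ (ε - 1) * (Real.exp (-ω * x ^ 2 / 2) * (-(ω * x))))
            * lagPoly n a (ω * x ^ 2)
        + ε * x ^ (ε - 1) * Real.exp (-ω * x ^ 2 / 2)
            * (lagPoly₁ n a (ω * x ^ 2) * (2 * ω * x))
        + ((ε * x ^ (ε - 1) * (Real.exp (-ω * x ^ 2 / 2) * (-(ω * x)))
            + x ^ ε * (Real.exp (-ω * x ^ 2 / 2) * (-(ω * x)) * (-(ω * x))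
              + Real.exp (-ω * x ^ 2 / 2) * (-ω))) * lagPoly n a (ω * x ^ 2)
          + x ^ ε * (Real.exp (-ω * x ^ 2 / 2) * (-(ω * x)))
              * (lagPoly₁ n a (ω * x ^ 2) * (2 * ω * x)))
        + ((ε * x ^ (ε - 1) * Real.exp (-ω * x ^ 2 / 2)
            + x ^ ε * (Real.exp (-ω * x ^ 2 / 2) * (-(ω * x))))
              * (lagPoly₁ n a (ω * x ^ 2) * (2 * ω * x))
          + x ^ ε * Real.exp (-ω * x ^ 2 / 2)
              * (lagPoly₂ n a (ω * x ^ 2) * (2 * ω * x) * (2 * ω * x)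
                + lagPoly₁ n a (ω * x ^ 2) * (2 * ω)))) x := by
    rw [hG1def]
    exact hG2
  -- assemble
  rw [laguerre_eq_poly n (ε - 1/2) (ω * x ^ 2) (by positivity), ← ha]
  rw [hdd, hG2'.deriv]
  -- algebra
  have hODE := lagPoly_ode n a (ω * x ^ 2)
  have hC : x ^ (ε - 1 - 1) = x ^ (ε - 2) := by rw [show ε - 1 - 1 = ε - 2 by ring]
  have hB : x ^ (ε - 1) = x ^ (ε - 2) * x := by
    rw [show ε - 1 = (ε - 2) + 1 by ring, Real.rpow_add hx0, Real.rpow_one]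
  have hA : x ^ ε = x ^ (ε - 2) * x ^ 2 := by
    rw [show ε = (ε - 2) + 2 by ring, Real.rpow_add hx0]
    norm_num [Real.rpow_natCast]
  rw [hC, hB, hA]
  have hpot : (ω ^ 2 * x ^ 2 / 2 + ε * (ε - 1) / (2 * x ^ 2))
        * (x ^ (ε - 2) * x ^ 2 * Real.exp (-ω * x ^ 2 / 2) * lagPoly n a (ω * x ^ 2))
      = ω ^ 2 * x ^ 2 / 2 * (x ^ (ε - 2) * x ^ 2 * Real.exp (-ω * x ^ 2 / 2)
          * lagPoly n a (ω * x ^ 2))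
        + ε * (ε - 1) / 2 * (x ^ (ε - 2) * Real.exp (-ω * x ^ 2 / 2)
          * lagPoly n a (ω * x ^ 2)) := by
    field_simp
  rw [hpot]
  linear_combination (-2 * ω * Real.exp (-ω * x ^ 2 / 2) * x ^ (ε - 2) * x ^ 2) * hODE
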